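/- Let K be the field ℝ or ℂ, (V, B) a finite-dimensional symplectic vector space over K, and P : V → V a nilpotent operator self-adjoint with respect to B. Suppose V = ⊕_{i=1}^N V_i is a B-orthogonal, P-invariant decomposition into nonzero subspaces such that, for each i, all Jordan blocks of P|_{V_i} have size exactly k_i (i.e. (P|_{V_i})^{k_i} = 0 and Ker(P|_{V_i}) ⊆ Im((P|_{V_i})^{k_i − 1})), with k_1 > k_2 > … > k_N. Then every subspace W invariant under Aut(V, B, P) decomposes as W = ⊕_{i=1}^N (W ∩ V_i). -/

import Mathlib

/-- A submodule `W` is invariant under `Aut(V, B, P)`, the group of linear automorphisms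
preserving the bilinear form `B` and commuting with the operator `P`. -/
def IsInvariantSubmodule {K V : Type*} [Field K] [AddCommGroup V] [Module K V]
    (B : LinearMap.BilinForm K V) (P : Module.End K V) (W : Submodule K V) : Prop :=
  ∀ g : V ≃ₗ[K] V, (∀ u v : V, B (g u) (g v) = B u v) → (∀ v : V, g (P v) = P (g v)) →
    W.map (g : V →ₗ[K] V) = W

theorem invariant_submodule_decomposes
    (K V : Type*) [RCLike K] [AddCommGroup V] [Module K V] [FiniteDimensional K V]
    (B : LinearMap.BilinForm K V) (hBalt : B.IsAlt)
    (hBnd : ∀ u : V, (∀ v : V, B u v = 0) → u = 0)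
    (P : Module.End K V) (hP : ∀ u v : V, B (P u) v = B u (P v))
    (hnil : IsNilpotent P)
    {N : ℕ} (Vs : Fin (N + 1) → Submodule K V) (hne : ∀ i, Vs i ≠ ⊥)
    (horth : ∀ i j, i ≠ j → ∀ u ∈ Vs i, ∀ v ∈ Vs j, B u v = 0)
    (hPVs : ∀ i, ∀ x ∈ Vs i, P x ∈ Vs i)
    (hindep : iSupIndep Vs) (hsup : ⨆ i, Vs i = ⊤)
    (k : Fin (N + 1) → ℕ) (hdec : StrictAnti k)
    (hblk : ∀ i, (P.restrict (hPVs i)) ^ (k i) = 0 ∧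
      LinearMap.ker (P.restrict (hPVs i))
        ≤ LinearMap.range ((P.restrict (hPVs i)) ^ (k i - 1)))
    (W : Submodule K V) (hW : IsInvariantSubmodule B P W)
 :
    W = ⨆ i, W ⊓ Vs i := by
  classical
  -- the complement of `Vs i`
  set Q : Fin (N + 1) → Submodule K V := fun i => ⨆ j, ⨆ _ : j ≠ i, Vs j with hQ
  have hVsQ : ∀ i j, j ≠ i → Vs j ≤ Q i := fun i j hji =>
    le_iSup_of_le j (le_iSup_of_le hji le_rfl)
  have hcompl : ∀ i, IsCompl (Vs i) (Q i) := by
    intro i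
    refine ⟨hindep i, ?_⟩
    rw [codisjoint_iff, eq_top_iff, ← hsup]
    refine iSup_le fun j => ?_
    by_cases hji : j = i
    · subst hji; exact le_sup_left
    · exact le_sup_of_le_right (hVsQ i j hji)
  -- projection onto `Vs i`
  set ρ : Fin (N + 1) → (V →ₗ[K] V) := fun i =>
    (Vs i).subtype ∘ₗ Submodule.linearProjOfIsCompl (Vs i) (Q i) (hcompl i) with hρ
  have hρ_mem : ∀ i v, ρ i v ∈ Vs i := fun i v =>
    (Submodule.linearProjOfIsCompl (Vs i) (Q i) (hcompl i) v).2
  have hρ_left : ∀ i, ∀ x ∈ Vs i, ρ i x = x := by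
    intro i x hx
    have := Submodule.linearProjOfIsCompl_apply_left (hcompl i) ⟨x, hx⟩
    exact congrArg ((↑) : Vs i → V) this
  have hρ_right : ∀ i, ∀ x ∈ Q i, ρ i x = 0 := by
    intro i x hx
    have := Submodule.projectionOnto_apply_of_mem_right (hcompl i) hx
    exact congrArg ((↑) : Vs i → V) this
  have hρ_sub : ∀ i v, v - ρ i v ∈ Q i := by
    intro i v
    have h := Submodule.projection_add_projection_eq_self (hcompl i) v
    have ha : ρ i v = ((Vs i).linearProjOfIsCompl (Q i) (hcompl i) v : V) := rfl
    have hb : v - ρ i v = (((Q i).linearProjOfIsCompl (Vs i) (hcompl i).symm v : V)) := by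
      rw [ha]
      exact (eq_sub_of_add_eq (by rw [add_comm]; exact h)).symm
    rw [hb]
    exact ((Q i).linearProjOfIsCompl (Vs i) (hcompl i).symm v).2
  -- P preserves Q i
  have hPQ : ∀ i, ∀ x ∈ Q i, P x ∈ Q i := by
    intro i
    have hle : Q i ≤ Submodule.comap P (Q i) :=
      iSup_le fun j => iSup_le fun hji x hx => hVsQ i j hji (hPVs j x hx)
    exact fun x hx => hle hx
  -- ρ commutes with P
  have hρP : ∀ i v, ρ i (P v) = P (ρ i v) := by
    intro i v
    have h1 : P v = P (ρ i v) + P (v - ρ i v) := by rw [← map_add]; congr 1; abel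
    rw [h1, map_add, hρ_left i _ (hPVs i _ (hρ_mem i v)),
      hρ_right i _ (hPQ i _ (hρ_sub i v)), add_zero]
  -- orthogonality between Vs i and Q i
  have horthQ : ∀ i, ∀ x ∈ Vs i, ∀ y ∈ Q i, B x y = 0 ∧ B y x = 0 := by
    intro i x hx y hy
    constructor
    · have hle : Q i ≤ LinearMap.ker (B x) :=
        iSup_le fun j => iSup_le fun hji z hz =>
          horth i j (fun h => hji h.symm) x hx z hz
      exact hle hy
    · have hle : Q i ≤ LinearMap.ker (B.flip x) :=
        iSup_le fun j => iSup_le fun hji z hz => horth j i hji z hz x hx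
      exact hle hy
  -- the sign-change maps are involutive
  set f : Fin (N + 1) → (V →ₗ[K] V) := fun i => LinearMap.id - (2 : K) • ρ i with hf
  have hinv : ∀ i, Function.Involutive ⇑(f i) := by
    intro i v
    simp only [hf, LinearMap.sub_apply, LinearMap.smul_apply, LinearMap.id_apply, map_sub,
      map_smul]
    rw [hρ_left i _ (hρ_mem i v)]
    module
  set g : Fin (N + 1) → (V ≃ₗ[K] V) := fun i =>
    LinearEquiv.ofInvolutive (f i) (hinv i) with hg
  have hg_apply : ∀ i v, g i v = v - (2 : K) • ρ i v := fun i v => rfl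
  have hgB : ∀ i u v, B (g i u) (g i v) = B u v := by
    intro i u v
    rw [hg_apply, hg_apply]
    set b := ρ i u with hb
    set d := ρ i v with hd
    set a := u - b with ha
    set c := v - d with hc
    have h1 : B b c = 0 ∧ B c b = 0 := horthQ i _ (hρ_mem i u) _ (hρ_sub i v)
    have h2 : B d a = 0 ∧ B a d = 0 := horthQ i _ (hρ_mem i v) _ (hρ_sub i u)
    have hu2 : u = a + b := by rw [ha]; abel
    have hv2 : v = c + d := by rw [hc]; abel
    have e1 : B (a - b) (c - d) = B a c - B a d - B b c + B b d := by
      simp only [map_sub, LinearMap.sub_apply]; ring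
    have e2 : B u v = B a c + B a d + B b c + B b d := by
      conv_lhs => rw [hu2, hv2]
      simp only [map_add, LinearMap.add_apply]; ring
    rw [show u - (2 : K) • b = a - b from by rw [ha]; module,
      show v - (2 : K) • d = c - d from by rw [hc]; module, e1, e2, h1.1, h2.2]
    ring
  have hgP : ∀ i v, g i (P v) = P (g i v) := by
    intro i v
    rw [hg_apply, hg_apply, map_sub, map_smul, hρP]
  -- the projections of elements of W stay in W
  have hρW : ∀ i, ∀ w ∈ W, ρ i w ∈ W := by
    intro i w hw
    have hgw : g i w ∈ W := by
      rw [← hW (g i) (hgB i) (hgP i)]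
      exact Submodule.mem_map_of_mem hw
    have h2 : w - g i w = (2 : K) • ρ i w := by rw [hg_apply]; abel
    have h3 : ρ i w = ((2 : K)⁻¹) • (w - g i w) := by
      rw [h2, smul_smul]; norm_num
    rw [h3]
    exact W.smul_mem _ (W.sub_mem hw hgw)
  -- sum of projections is the identity
  have hsum : ∀ v, ∑ i, ρ i v = v := by
    intro v
    have hle : (⊤ : Submodule K V) ≤
        LinearMap.ker ((∑ i, ρ i) - LinearMap.id) := by
      rw [← hsup]
      refine iSup_le fun j x hx => ?_
      have : (∑ i, ρ i) x = x := by
        rw [LinearMap.sum_apply, Finset.sum_eq_single j]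
        · exact hρ_left j x hx
        · intro i _ hij
          exact hρ_right i x (hVsQ i j (fun h => hij h.symm) hx)
        · intro h; exact absurd (Finset.mem_univ j) h
      simpa [LinearMap.mem_ker, LinearMap.sub_apply, sub_eq_zero] using this
    have := hle (Submodule.mem_top : v ∈ ⊤)
    simpa [LinearMap.mem_ker, LinearMap.sub_apply, sub_eq_zero, LinearMap.sum_apply] using this
  -- conclusion
  refine le_antisymm ?_ (iSup_le fun i => inf_le_left)
  intro w hw
  rw [← hsum w]
  refine Submodule.sum_mem _ fun i _ => ?_
  exact Submodule.mem_iSup_of_mem i (Submodule.mem_inf.2 ⟨hρW i w hw, hρ_mem i w⟩)
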